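/- arXiv:1211.4194 — 2 statements merged into one kernel-verified Lean document; each statement's English description precedes it below -/
import Mathlib

section
/- Let k_{12} be a positive integer and let k_{13} and k_{23} be positive integers not divisible by 2 or by 3. Then the Coxeter group W = ⟨s_1,s_2,s_3 | s_i^2 = (s_1 s_2)^{3k_{12}} = (s_1 s_3)^{5k_{13}} = (s_2 s_3)^{5k_{23}} = 1⟩ contains a subgroup of index 18·k_{12} generated by reflections; in particular W has a proper finite-index reflection subgroup. -/
set_option linter.unusedSectionVars false

namespace Statement3Aux

/-! ### Parity arithmetic in `ZMod n` -/

section Parity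
variable {n : ℕ} [NeZero n]

lemma zval_add_one (h1n : 1 < n) (j : ZMod n) : (j + 1).val = (j.val + 1) % n := by
  rw [ZMod.val_add, ZMod.val_one_eq_one_mod, Nat.mod_eq_of_lt h1n]

lemma par_add_one (hn2 : 2 ∣ n) (h1n : 1 < n) (j : ZMod n) :
    (j + 1).val % 2 = (j.val + 1) % 2 := by
  rw [zval_add_one h1n, Nat.mod_mod_of_dvd _ hn2]

lemma par_sub_one (hn2 : 2 ∣ n) (h1n : 1 < n) (j : ZMod n) :
    (j - 1).val % 2 = (j.val + 1) % 2 := by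
  have h := par_add_one hn2 h1n (j - 1)
  rw [sub_add_cancel] at h
  omega

lemma par_natCast (hn2 : 2 ∣ n) (m : ℕ) : ((m : ZMod n)).val % 2 = m % 2 := by
  rw [ZMod.val_natCast, Nat.mod_mod_of_dvd _ hn2]

end Parity

/-! ### The permutations -/

/-- Points: `.inl j` = A-cell, `.inr (.inl j)` = B-cell, `.inr (.inr j)` = X-cell. -/
abbrev Pt (n : ℕ) := ZMod n ⊕ (ZMod n ⊕ ZMod n)

section Perms
variable {n : ℕ} [NeZero n]

def f0 : Pt n → Pt n
  | .inl j => .inl (if j.val % 2 = 0 then j + 1 else j - 1)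
  | .inr (.inl j) => if j.val % 2 = 0 then .inr (.inr j) else .inr (.inl j)
  | .inr (.inr j) => if j.val % 2 = 0 then .inr (.inl j) else .inr (.inr j)

def f1 : Pt n → Pt n
  | .inl j => .inl (if j.val % 2 = 0 then j - 1 else j + 1)
  | .inr (.inl j) => if j.val % 2 = 0 then .inr (.inr (j + 1)) else .inr (.inl j)
  | .inr (.inr j) => if j.val % 2 = 0 then .inr (.inr j) else .inr (.inl (j - 1))

def f2 : Pt n → Pt n
  | .inl j => .inr (.inl j)
  | .inr (.inl j) => .inl j
  | .inr (.inr j) => .inr (.inr j)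

-- application lemmas
lemma f0A0 {j : ZMod n} (h : j.val % 2 = 0) : f0 (.inl j) = .inl (j + 1) := by simp [f0, h]
lemma f0A1 {j : ZMod n} (h : j.val % 2 = 1) : f0 (.inl j) = .inl (j - 1) := by simp [f0, h]
lemma f0B0 {j : ZMod n} (h : j.val % 2 = 0) : f0 (.inr (.inl j)) = .inr (.inr j) := by
  simp [f0, h]
lemma f0B1 {j : ZMod n} (h : j.val % 2 = 1) : f0 (.inr (.inl j)) = .inr (.inl j) := by
  simp [f0, h]
lemma f0X0 {j : ZMod n} (h : j.val % 2 = 0) : f0 (.inr (.inr j)) = .inr (.inl j) := by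
  simp [f0, h]
lemma f0X1 {j : ZMod n} (h : j.val % 2 = 1) : f0 (.inr (.inr j)) = .inr (.inr j) := by
  simp [f0, h]

lemma f1A0 {j : ZMod n} (h : j.val % 2 = 0) : f1 (.inl j) = .inl (j - 1) := by simp [f1, h]
lemma f1A1 {j : ZMod n} (h : j.val % 2 = 1) : f1 (.inl j) = .inl (j + 1) := by simp [f1, h]
lemma f1B0 {j : ZMod n} (h : j.val % 2 = 0) : f1 (.inr (.inl j)) = .inr (.inr (j + 1)) := by
  simp [f1, h]
lemma f1B1 {j : ZMod n} (h : j.val % 2 = 1) : f1 (.inr (.inl j)) = .inr (.inl j) := by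
  simp [f1, h]
lemma f1X0 {j : ZMod n} (h : j.val % 2 = 0) : f1 (.inr (.inr j)) = .inr (.inr j) := by
  simp [f1, h]
lemma f1X1 {j : ZMod n} (h : j.val % 2 = 1) : f1 (.inr (.inr j)) = .inr (.inl (j - 1)) := by
  simp [f1, h]

lemma parity_cases (j : ZMod n) : j.val % 2 = 0 ∨ j.val % 2 = 1 := by omega

lemma f0_invol (hn2 : 2 ∣ n) (h1n : 1 < n) : Function.LeftInverse (f0 (n := n)) (f0 (n := n)) := by
  intro x
  rcases x with j | j | j
  · rcases parity_cases j with h | h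
    · have h1 : (j + 1).val % 2 = 1 := by rw [par_add_one hn2 h1n]; omega
      rw [f0A0 h, f0A1 h1, add_sub_cancel_right]
    · have h1 : (j - 1).val % 2 = 0 := by rw [par_sub_one hn2 h1n]; omega
      rw [f0A1 h, f0A0 h1, sub_add_cancel]
  · rcases parity_cases j with h | h
    · rw [f0B0 h, f0X0 h]
    · rw [f0B1 h, f0B1 h]
  · rcases parity_cases j with h | h
    · rw [f0X0 h, f0B0 h]
    · rw [f0X1 h, f0X1 h]

lemma f1_invol (hn2 : 2 ∣ n) (h1n : 1 < n) : Function.LeftInverse (f1 (n := n)) (f1 (n := n)) := by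
  intro x
  rcases x with j | j | j
  · rcases parity_cases j with h | h
    · have h1 : (j - 1).val % 2 = 1 := by rw [par_sub_one hn2 h1n]; omega
      rw [f1A0 h, f1A1 h1, sub_add_cancel]
    · have h1 : (j + 1).val % 2 = 0 := by rw [par_add_one hn2 h1n]; omega
      rw [f1A1 h, f1A0 h1, add_sub_cancel_right]
  · rcases parity_cases j with h | h
    · have h1 : (j + 1).val % 2 = 1 := by rw [par_add_one hn2 h1n]; omega
      rw [f1B0 h, f1X1 h1, add_sub_cancel_right]
    · rw [f1B1 h, f1B1 h]
  · rcases parity_cases j with h | h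
    · rw [f1X0 h, f1X0 h]
    · have h1 : (j - 1).val % 2 = 0 := by rw [par_sub_one hn2 h1n]; omega
      rw [f1X1 h, f1B0 h1, sub_add_cancel]

lemma f2_invol : Function.LeftInverse (f2 (n := n)) (f2 (n := n)) := by
  intro x; rcases x with j | j | j <;> rfl

def σ0 (hn2 : 2 ∣ n) (h1n : 1 < n) : Equiv.Perm (Pt n) := ⟨f0, f0, f0_invol hn2 h1n, f0_invol hn2 h1n⟩
def σ1 (hn2 : 2 ∣ n) (h1n : 1 < n) : Equiv.Perm (Pt n) := ⟨f1, f1, f1_invol hn2 h1n, f1_invol hn2 h1n⟩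
def σ2 : Equiv.Perm (Pt n) := ⟨f2, f2, f2_invol, f2_invol⟩

@[simp] lemma σ0_apply (hn2 : 2 ∣ n) (h1n : 1 < n) (x : Pt n) : σ0 hn2 h1n x = f0 x := rfl
@[simp] lemma σ1_apply (hn2 : 2 ∣ n) (h1n : 1 < n) (x : Pt n) : σ1 hn2 h1n x = f1 x := rfl
@[simp] lemma σ2_apply (x : Pt n) : σ2 x = f2 x := rfl

lemma σ0_sq (hn2 : 2 ∣ n) (h1n : 1 < n) : σ0 hn2 h1n * σ0 hn2 h1n = 1 := by
  ext x; exact f0_invol hn2 h1n x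
lemma σ1_sq (hn2 : 2 ∣ n) (h1n : 1 < n) : σ1 hn2 h1n * σ1 hn2 h1n = 1 := by
  ext x; exact f1_invol hn2 h1n x
lemma σ2_sq : (σ2 : Equiv.Perm (Pt n)) * σ2 = 1 := by
  ext x; exact f2_invol x

end Perms


section Rels
variable {n : ℕ} [NeZero n]

@[simp] lemma f2A (j : ZMod n) : f2 (.inl j) = .inr (.inl j) := rfl
@[simp] lemma f2B (j : ZMod n) : f2 (.inr (.inl j)) = .inl j := rfl
@[simp] lemma f2X (j : ZMod n) : f2 (.inr (.inr j)) = .inr (.inr j) := rfl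

lemma fixpow {α : Type*} (g : Equiv.Perm α) {x : α} (h : g x = x) (m : ℕ) : (g ^ m) x = x := by
  induction m with
  | zero => rfl
  | succ m ih => rw [pow_succ, Equiv.Perm.mul_apply, h, ih]

lemma pi01_A (hn2 : 2 ∣ n) (h1n : 1 < n) (m : ℕ) (j : ZMod n) :
    ((σ0 hn2 h1n * σ1 hn2 h1n) ^ m) (.inl j) =
      if j.val % 2 = 0 then .inl (j - 2 * m) else .inl (j + 2 * m) := by
  induction m generalizing j with
  | zero => simp
  | succ m ih =>
    rw [pow_succ, Equiv.Perm.mul_apply, Equiv.Perm.mul_apply, σ1_apply, σ0_apply]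
    rcases parity_cases j with h | h
    · have h1 : (j - 1).val % 2 = 1 := by rw [par_sub_one hn2 h1n]; omega
      have h2 : (j - 1 - 1).val % 2 = 0 := by rw [par_sub_one hn2 h1n]; omega
      rw [f1A0 h, f0A1 h1, ih, if_pos h2, if_pos h]
      congr 1
      push_cast
      ring
    · have h1 : (j + 1).val % 2 = 0 := by rw [par_add_one hn2 h1n]; omega
      have h2 : (j + 1 + 1).val % 2 = 1 := by rw [par_add_one hn2 h1n]; omega
      rw [f1A1 h, f0A0 h1, ih, if_neg (by omega), if_neg (by omega)]
      congr 1
      push_cast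
      ring

lemma pi01_cube_BX (hn2 : 2 ∣ n) (h1n : 1 < n) (y : ZMod n ⊕ ZMod n) :
    ((σ0 hn2 h1n * σ1 hn2 h1n) ^ 3) (.inr y) = .inr y := by
  have expand : ∀ x : Pt n, ((σ0 hn2 h1n * σ1 hn2 h1n) ^ 3) x =
      f0 (f1 (f0 (f1 (f0 (f1 x))))) := by
    intro x
    simp [pow_succ, Equiv.Perm.mul_apply]
  rcases y with j | j
  · rcases parity_cases j with h | h
    · have h1 : (j + 1).val % 2 = 1 := by rw [par_add_one hn2 h1n]; omega
      rw [expand]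
      simp only [f1B0 h, f0X1 h1, f1X1 h1, add_sub_cancel_right, f0B0 h, f1X0 h, f0X0 h]
    · rw [expand]
      simp only [f1B1 h, f0B1 h]
  · rcases parity_cases j with h | h
    · have h1 : (j + 1).val % 2 = 1 := by rw [par_add_one hn2 h1n]; omega
      rw [expand]
      simp only [f1X0 h, f0X0 h, f1B0 h, f0X1 h1, f1X1 h1, add_sub_cancel_right, f0B0 h]
    · have h1 : (j - 1).val % 2 = 0 := by rw [par_sub_one hn2 h1n]; omega
      rw [expand]
      simp only [f1X1 h, f0B0 h1, f1X0 h1, f0X0 h1, f1B0 h1, sub_add_cancel, f0X1 h]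

lemma rel01 (hn2 : 2 ∣ n) (h1n : 1 < n) (k : ℕ) (hk : n = 6 * k) :
    (σ0 hn2 h1n * σ1 hn2 h1n) ^ (3 * k) = 1 := by
  ext x
  rcases x with j | y
  · rw [pi01_A hn2 h1n (3 * k) j]
    have hz : (2 * ((3 * k : ℕ) : ZMod n)) = 0 := by
      have h2 : ((2 * (3 * k) : ℕ) : ZMod n) = 2 * ((3 * k : ℕ) : ZMod n) := by push_cast; ring
      rw [← h2, show 2 * (3 * k) = n by omega, ZMod.natCast_self]
    rw [hz]
    split <;> simp
  · rw [show (3 : ℕ) * k = 3 * k from rfl, pow_mul]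
    have := pi01_cube_BX hn2 h1n y
    simpa using fixpow _ this k

lemma rel02 (hn2 : 2 ∣ n) (h1n : 1 < n) :
    (σ0 hn2 h1n * σ2 (n := n)) ^ 5 = 1 := by
  have expand : ∀ x : Pt n, ((σ0 hn2 h1n * σ2 (n := n)) ^ 5) x =
      f0 (f2 (f0 (f2 (f0 (f2 (f0 (f2 (f0 (f2 x))))))))) := by
    intro x
    simp [pow_succ, Equiv.Perm.mul_apply]
  ext x
  rcases x with j | j | j
  · rcases parity_cases j with h | h
    · have h1 : (j + 1).val % 2 = 1 := by rw [par_add_one hn2 h1n]; omega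
      rw [expand]
      simp only [f2A, f2B, f2X, f0B0 h, f0X0 h, f0A0 h, f0B1 h1, f0A1 h1,
        add_sub_cancel_right]
      rfl
    · have h1 : (j - 1).val % 2 = 0 := by rw [par_sub_one hn2 h1n]; omega
      rw [expand]
      simp only [f2A, f2B, f2X, f0B1 h, f0A1 h, f0B0 h1, f0X0 h1, f0A0 h1, sub_add_cancel]
      rfl
  · rcases parity_cases j with h | h
    · have h1 : (j + 1).val % 2 = 1 := by rw [par_add_one hn2 h1n]; omega
      rw [expand]
      simp only [f2A, f2B, f2X, f0A0 h, f0B1 h1, f0A1 h1, add_sub_cancel_right, f0B0 h,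
        f0X0 h]
      rfl
    · have h1 : (j - 1).val % 2 = 0 := by rw [par_sub_one hn2 h1n]; omega
      rw [expand]
      simp only [f2A, f2B, f2X, f0A1 h, f0B0 h1, f0X0 h1, f0A0 h1, sub_add_cancel, f0B1 h]
      rfl
  · rcases parity_cases j with h | h
    · have h1 : (j + 1).val % 2 = 1 := by rw [par_add_one hn2 h1n]; omega
      rw [expand]
      simp only [f2A, f2B, f2X, f0X0 h, f0A0 h, f0B1 h1, f0A1 h1, add_sub_cancel_right,
        f0B0 h]
      rfl
    · rw [expand]
      simp only [f2X, f0X1 h]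
      rfl

lemma rel12 (hn2 : 2 ∣ n) (h1n : 1 < n) :
    (σ1 hn2 h1n * σ2 (n := n)) ^ 5 = 1 := by
  have expand : ∀ x : Pt n, ((σ1 hn2 h1n * σ2 (n := n)) ^ 5) x =
      f1 (f2 (f1 (f2 (f1 (f2 (f1 (f2 (f1 (f2 x))))))))) := by
    intro x
    simp [pow_succ, Equiv.Perm.mul_apply]
  ext x
  rcases x with j | j | j
  · rcases parity_cases j with h | h
    · have h1 : (j + 1).val % 2 = 1 := by rw [par_add_one hn2 h1n]; omega
      have h2 : (j - 1).val % 2 = 1 := by rw [par_sub_one hn2 h1n]; omega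
      rw [expand]
      simp only [f2A, f2B, f2X, f1B0 h, f1X1 h1, add_sub_cancel_right, f1A0 h, f1B1 h2,
        f1A1 h2, sub_add_cancel]
      rfl
    · have h1 : (j + 1).val % 2 = 0 := by rw [par_add_one hn2 h1n]; omega
      have h2 : (j + 1 + 1).val % 2 = 1 := by rw [par_add_one hn2 h1n]; omega
      rw [expand]
      simp only [f2A, f2B, f2X, f1B1 h, f1A1 h, f1B0 h1, f1X1 h2, add_sub_cancel_right,
        f1A0 h1]
      rfl
  · rcases parity_cases j with h | h
    · have h1 : (j - 1).val % 2 = 1 := by rw [par_sub_one hn2 h1n]; omega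
      have h2 : (j + 1).val % 2 = 1 := by rw [par_add_one hn2 h1n]; omega
      rw [expand]
      simp only [f2A, f2B, f2X, f1A0 h, f1B1 h1, f1A1 h1, sub_add_cancel, f1B0 h,
        f1X1 h2, add_sub_cancel_right]
      rfl
    · have h1 : (j + 1).val % 2 = 0 := by rw [par_add_one hn2 h1n]; omega
      have h2 : (j + 1 + 1).val % 2 = 1 := by rw [par_add_one hn2 h1n]; omega
      rw [expand]
      simp only [f2A, f2B, f2X, f1A1 h, f1B0 h1, f1X1 h2, add_sub_cancel_right, f1A0 h1,
        f1B1 h]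
      rfl
  · rcases parity_cases j with h | h
    · rw [expand]
      simp only [f2X, f1X0 h]
      rfl
    · have h1 : (j - 1).val % 2 = 0 := by rw [par_sub_one hn2 h1n]; omega
      have h2 : (j - 1 - 1).val % 2 = 1 := by rw [par_sub_one hn2 h1n]; omega
      rw [expand]
      simp only [f2A, f2B, f2X, f1X1 h, f1B0 h1, sub_add_cancel, f1A0 h1, f1B1 h2,
        f1A1 h2, f1B0 h1]
      rfl

lemma swap_pow {G : Type*} [Group G] {a b : G} (ha : a * a = 1) (hb : b * b = 1) {m : ℕ}
    (h : (a * b) ^ m = 1) : (b * a) ^ m = 1 := by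
  have hab : (a * b)⁻¹ = b * a := by
    rw [mul_inv_rev, inv_eq_of_mul_eq_one_right ha, inv_eq_of_mul_eq_one_right hb]
  rw [← hab, inv_pow, h, inv_one]

end Rels

section Cox
variable {W : Type*} [Group W] {M : CoxeterMatrix (Fin 3)} (cs : CoxeterSystem M W)
variable {n : ℕ} [NeZero n]

/-- The alternating word `s₀ s₁ s₀ s₁ ⋯` of length `m`. -/
def wrd : ℕ → W
  | 0 => 1
  | m + 1 => wrd m * (if m % 2 = 0 then cs.simple 0 else cs.simple 1)

lemma wrd_succ (m : ℕ) :
    wrd cs (m + 1) = wrd cs m * (if m % 2 = 0 then cs.simple 0 else cs.simple 1) := rfl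

omit [NeZero n] in
lemma wrd_even (m : ℕ) : wrd cs (2 * m) = (cs.simple 0 * cs.simple 1) ^ m := by
  induction m with
  | zero => simp [wrd]
  | succ m ih =>
    have e : 2 * (m + 1) = (2 * m + 1) + 1 := by ring
    have h0 : (2 * m) % 2 = 0 := by omega
    have h1 : (2 * m + 1) % 2 = 1 := by omega
    rw [e, wrd_succ, wrd_succ, if_pos h0, if_neg (by omega), ih, pow_succ, mul_assoc]

/-- Coset representative words. -/
def Uw : Pt n → W
  | .inl j => wrd cs j.val
  | .inr (.inl j) => wrd cs j.val * cs.simple 2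
  | .inr (.inr j) =>
      if j.val % 2 = 0 then wrd cs j.val * cs.simple 2 * cs.simple 0
      else wrd cs (j - 1).val * cs.simple 2 * cs.simple 1

lemma val_succ_of_even (hn2 : 2 ∣ n) (h1n : 1 < n) {j : ZMod n} (h : j.val % 2 = 0) : (j + 1).val = j.val + 1 := by
  rw [zval_add_one h1n]
  have := ZMod.val_lt j
  rcases hn2 with ⟨c, rfl⟩
  apply Nat.mod_eq_of_lt
  omega

lemma val_eq_pred_succ (hn2 : 2 ∣ n) (h1n : 1 < n) {j : ZMod n} (h : j.val % 2 = 1) : j.val = (j - 1).val + 1 := by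
  have h0 : (j - 1).val % 2 = 0 := by rw [par_sub_one hn2 h1n]; omega
  have h2 := val_succ_of_even hn2 h1n h0
  rwa [sub_add_cancel] at h2

variable (hn2 : 2 ∣ n) (h1n : 1 < n)

/-- The permutation associated to each simple generator. -/
def F : Fin 3 → Equiv.Perm (Pt n) := fun i =>
  if i = 0 then σ0 hn2 h1n else if i = 1 then σ1 hn2 h1n else σ2

lemma F_inv (i : Fin 3) : (F hn2 h1n i)⁻¹ = F hn2 h1n i := by
  unfold F
  split
  · rfl
  · split <;> rfl

/-- The key "coset table" lemma: multiplying a representative by a simple reflection either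
gives another representative, or the corresponding cell is fixed by that generator. -/
lemma step (hWrap : wrd cs n = 1) (p : Pt n) (i : Fin 3) :
    (∃ q : Pt n, Uw cs p * cs.simple i = Uw cs q) ∨ (F hn2 h1n i p = p) := by
  fin_cases i
  · -- generator 0
    rcases p with j | j | j
    · left
      rcases parity_cases j with h | h
      · refine ⟨.inl (j + 1), ?_⟩
        show wrd cs j.val * cs.simple 0 = wrd cs (j + 1).val
        rw [val_succ_of_even hn2 h1n h, wrd_succ, if_pos h]
      · refine ⟨.inl (j - 1), ?_⟩
        show wrd cs j.val * cs.simple 0 = wrd cs (j - 1).val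
        have h0 : (j - 1).val % 2 = 0 := by rw [par_sub_one hn2 h1n]; omega
        rw [val_eq_pred_succ hn2 h1n h, wrd_succ, if_pos h0, mul_assoc,
          cs.simple_mul_simple_self, mul_one]
    · rcases parity_cases j with h | h
      · left
        refine ⟨.inr (.inr j), ?_⟩
        show (wrd cs j.val * cs.simple 2) * cs.simple 0 = Uw cs (.inr (.inr j))
        rw [Uw, if_pos h]
      · right
        simp only [F]
        rw [if_pos (by decide)]
        rw [σ0_apply]
        rw [f0B1 h]
    · rcases parity_cases j with h | h
      · left
        refine ⟨.inr (.inl j), ?_⟩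
        show Uw cs (.inr (.inr j)) * cs.simple 0 = wrd cs j.val * cs.simple 2
        rw [Uw, if_pos h, mul_assoc (wrd cs j.val * cs.simple 2),
          cs.simple_mul_simple_self, mul_one]
      · right
        simp only [F]
        rw [if_pos (by decide)]
        rw [σ0_apply]
        rw [f0X1 h]
  · -- generator 1
    rcases p with j | j | j
    · left
      rcases parity_cases j with h | h
      · refine ⟨.inl (j - 1), ?_⟩
        show wrd cs j.val * cs.simple 1 = wrd cs (j - 1).val
        have h1 : (j - 1).val % 2 = 1 := by rw [par_sub_one hn2 h1n]; omega
        have hj : j.val = ((j - 1).val + 1) % n := by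
          conv_lhs => rw [← sub_add_cancel j 1]
          rw [zval_add_one h1n]
        rcases Nat.lt_or_ge ((j - 1).val + 1) n with hlt | hge
        · rw [Nat.mod_eq_of_lt hlt] at hj
          rw [hj, wrd_succ, if_neg (by omega), mul_assoc, cs.simple_mul_simple_self, mul_one]
        · -- wrap-around: (j-1).val = n - 1 and j.val = 0
          have hv := ZMod.val_lt (j - 1)
          have hjn : (j - 1).val = n - 1 := by omega
          have hj0 : j.val = 0 := by
            rw [hjn] at hj
            simpa [Nat.sub_add_cancel (by omega : 1 ≤ n)] using hj
          have hwn : wrd cs ((n - 1) + 1) = wrd cs (n - 1) * cs.simple 1 := by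
            rw [wrd_succ, if_neg (by rw [hjn] at h1; omega)]
          rw [Nat.sub_add_cancel (by omega : 1 ≤ n), hWrap] at hwn
          rw [hj0, hjn]
          show (1 : W) * cs.simple 1 = wrd cs (n - 1)
          rw [one_mul]
          have h2 : wrd cs (n - 1) = cs.simple 1 := by
            have h3 := congrArg (· * (cs.simple 1)⁻¹) hwn
            simpa [mul_assoc] using h3.symm
          exact h2.symm
      · refine ⟨.inl (j + 1), ?_⟩
        show wrd cs j.val * cs.simple 1 = wrd cs (j + 1).val
        have hj : (j + 1).val = (j.val + 1) % n := zval_add_one h1n j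
        rcases Nat.lt_or_ge (j.val + 1) n with hlt | hge
        · rw [Nat.mod_eq_of_lt hlt] at hj
          rw [hj, wrd_succ, if_neg (by omega)]
        · have hv := ZMod.val_lt j
          have hjn : j.val = n - 1 := by omega
          have hj0 : (j + 1).val = 0 := by
            rw [hjn] at hj
            simpa [Nat.sub_add_cancel (by omega : 1 ≤ n)] using hj
          have hwn : wrd cs ((n - 1) + 1) = wrd cs (n - 1) * cs.simple 1 := by
            rw [wrd_succ, if_neg (by rw [hjn] at h; omega)]
          rw [Nat.sub_add_cancel (by omega : 1 ≤ n), hWrap] at hwn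
          rw [hj0, hjn]
          show wrd cs (n - 1) * cs.simple 1 = wrd cs 0
          rw [← hwn]
          rfl
    · rcases parity_cases j with h | h
      · left
        refine ⟨.inr (.inr (j + 1)), ?_⟩
        have h1 : (j + 1).val % 2 = 1 := by rw [par_add_one hn2 h1n]; omega
        show (wrd cs j.val * cs.simple 2) * cs.simple 1 = Uw cs (.inr (.inr (j + 1)))
        rw [Uw, if_neg (by omega), add_sub_cancel_right]
      · right
        simp only [F]
        rw [if_neg (by decide), if_pos (by decide)]
        rw [σ1_apply]
        rw [f1B1 h]
    · rcases parity_cases j with h | h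
      · right
        simp only [F]
        rw [if_neg (by decide), if_pos (by decide)]
        rw [σ1_apply]
        rw [f1X0 h]
      · left
        refine ⟨.inr (.inl (j - 1)), ?_⟩
        show Uw cs (.inr (.inr j)) * cs.simple 1 = wrd cs (j - 1).val * cs.simple 2
        rw [Uw, if_neg (by omega), mul_assoc (wrd cs (j - 1).val * cs.simple 2),
          cs.simple_mul_simple_self, mul_one]
  · -- generator 2
    rcases p with j | j | j
    · left
      exact ⟨.inr (.inl j), rfl⟩
    · left
      refine ⟨.inl j, ?_⟩
      show (wrd cs j.val * cs.simple 2) * cs.simple 2 = wrd cs j.val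
      rw [mul_assoc, cs.simple_mul_simple_self, mul_one]
    · right
      simp only [F]
      rw [if_neg (by decide), if_neg (by decide)]
      rw [σ2_apply]
      rw [f2X]

end Cox

section Cox2
variable {W : Type*} [Group W] {M : CoxeterMatrix (Fin 3)} (cs : CoxeterSystem M W)
variable {n : ℕ} [NeZero n]

lemma F0 (hn2 : 2 ∣ n) (h1n : 1 < n) : F hn2 h1n 0 = σ0 hn2 h1n := rfl
lemma F1 (hn2 : 2 ∣ n) (h1n : 1 < n) : F hn2 h1n 1 = σ1 hn2 h1n := rfl
lemma F2 (hn2 : 2 ∣ n) (h1n : 1 < n) : F hn2 h1n 2 = σ2 := rfl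

lemma LA (hn2 : 2 ∣ n) (h1n : 1 < n) (φ : W →* Equiv.Perm (Pt n))
    (hφ0 : φ (cs.simple 0) = σ0 hn2 h1n) (hφ1 : φ (cs.simple 1) = σ1 hn2 h1n)
    (m : ℕ) :
    φ ((wrd cs m)⁻¹) (Sum.inl (0 : ZMod n)) = Sum.inl ((m : ℕ) : ZMod n) := by
  induction m with
  | zero => simp [wrd]
  | succ m ih =>
    rw [wrd_succ, mul_inv_rev, map_mul, Equiv.Perm.mul_apply, ih]
    rcases Nat.mod_two_eq_zero_or_one m with hm | hm
    · have he : m % 2 = 0 := by omega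
      have hp : ((m : ZMod n)).val % 2 = 0 := by rw [par_natCast hn2]; omega
      rw [if_pos he, cs.inv_simple, hφ0, σ0_apply, f0A0 hp]
      congr 1
      push_cast
      ring
    · have he : ¬ (m % 2 = 0) := by omega
      have hp : ((m : ZMod n)).val % 2 = 1 := by rw [par_natCast hn2]; omega
      rw [if_neg he, cs.inv_simple, hφ1, σ1_apply, f1A1 hp]
      congr 1
      push_cast
      ring

lemma Lfull (hn2 : 2 ∣ n) (h1n : 1 < n) (φ : W →* Equiv.Perm (Pt n))
    (hφ0 : φ (cs.simple 0) = σ0 hn2 h1n) (hφ1 : φ (cs.simple 1) = σ1 hn2 h1n)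
    (hφ2 : φ (cs.simple 2) = σ2) (p : Pt n) :
    φ ((Uw cs p)⁻¹) (Sum.inl (0 : ZMod n)) = p := by
  have hval : ∀ j : ZMod n, ((j.val : ℕ) : ZMod n) = j := by
    intro j
    rw [ZMod.natCast_val, ZMod.cast_id]
  rcases p with j | j | j
  · rw [show Uw cs (.inl j) = wrd cs j.val from rfl, LA cs hn2 h1n φ hφ0 hφ1, hval]
  · rw [show Uw cs (.inr (.inl j)) = wrd cs j.val * cs.simple 2 from rfl, mul_inv_rev,
      map_mul, Equiv.Perm.mul_apply, LA cs hn2 h1n φ hφ0 hφ1, hval, cs.inv_simple, hφ2,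
      σ2_apply, f2A]
  · rcases parity_cases j with h | h
    · rw [show Uw cs (.inr (.inr j)) = wrd cs j.val * cs.simple 2 * cs.simple 0 from by
        rw [Uw, if_pos h]]
      rw [mul_inv_rev, mul_inv_rev, map_mul, map_mul, Equiv.Perm.mul_apply,
        Equiv.Perm.mul_apply, LA cs hn2 h1n φ hφ0 hφ1, hval,
        cs.inv_simple, cs.inv_simple, hφ2, σ2_apply, f2A, hφ0, σ0_apply, f0B0 h]
    · have h0 : (j - 1).val % 2 = 0 := by rw [par_sub_one hn2 h1n]; omega
      rw [show Uw cs (.inr (.inr j)) = wrd cs (j - 1).val * cs.simple 2 * cs.simple 1 from by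
        rw [Uw, if_neg (by omega)]]
      rw [mul_inv_rev, mul_inv_rev, map_mul, map_mul, Equiv.Perm.mul_apply,
        Equiv.Perm.mul_apply, LA cs hn2 h1n φ hφ0 hφ1, hval,
        cs.inv_simple, cs.inv_simple, hφ2, σ2_apply, f2A, hφ1, σ1_apply, f1B0 h0,
        sub_add_cancel]

end Cox2

end Statement3Aux

open Statement3Aux

/-- Let `k₁₂ > 0` and let `k₁₃, k₂₃ > 0` be divisible by neither 2 nor 3.
Then the rank-3 Coxeter group with `m₁₂ = 3k₁₂`, `m₁₃ = 5k₁₃`, `m₂₃ = 5k₂₃` contains a subgroup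
of index `18·k₁₂` generated by reflections; in particular it has a proper finite-index
reflection subgroup. -/
theorem statement3 {M : CoxeterMatrix (Fin 3)} {W : Type*} [Group W]
    (cs : CoxeterSystem M W)
    (k₁₂ k₁₃ k₂₃ : ℕ) (hk₁₂ : 0 < k₁₂) (hk₁₃ : 0 < k₁₃) (hk₂₃ : 0 < k₂₃)
    (hk₁₃2 : ¬ (2 ∣ k₁₃)) (hk₁₃3 : ¬ (3 ∣ k₁₃))
    (hk₂₃2 : ¬ (2 ∣ k₂₃)) (hk₂₃3 : ¬ (3 ∣ k₂₃))
    (h12 : M 0 1 = 3 * k₁₂) (h13 : M 0 2 = 5 * k₁₃) (h23 : M 1 2 = 5 * k₂₃) :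
    ∃ T : Set W, (∀ t ∈ T, cs.IsReflection t) ∧
      (Subgroup.closure T).index = 18 * k₁₂ ∧ Subgroup.closure T ≠ ⊤ := by
  classical
  set n := 6 * k₁₂ with hn
  haveI : NeZero n := ⟨by omega⟩
  have hn2 : 2 ∣ n := ⟨3 * k₁₂, by omega⟩
  have h1n : 1 < n := by omega
  have hlift : M.IsLiftable (F (n := n) hn2 h1n) := by
    intro i i'
    fin_cases i <;> fin_cases i'
    · show (F hn2 h1n 0 * F hn2 h1n 0) ^ (M 0 0) = 1
      rw [M.diagonal, pow_one, F0, σ0_sq]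
    · show (F hn2 h1n 0 * F hn2 h1n 1) ^ (M 0 1) = 1
      rw [h12, F0, F1]
      exact rel01 hn2 h1n k₁₂ hn
    · show (F hn2 h1n 0 * F hn2 h1n 2) ^ (M 0 2) = 1
      rw [h13, F0, F2, pow_mul, rel02 hn2 h1n, one_pow]
    · show (F hn2 h1n 1 * F hn2 h1n 0) ^ (M 1 0) = 1
      rw [M.symmetric 1 0, h12, F0, F1]
      exact swap_pow (σ0_sq hn2 h1n) (σ1_sq hn2 h1n) (rel01 hn2 h1n k₁₂ hn)
    · show (F hn2 h1n 1 * F hn2 h1n 1) ^ (M 1 1) = 1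
      rw [M.diagonal, pow_one, F1, σ1_sq]
    · show (F hn2 h1n 1 * F hn2 h1n 2) ^ (M 1 2) = 1
      rw [h23, F1, F2, pow_mul, rel12 hn2 h1n, one_pow]
    · show (F hn2 h1n 2 * F hn2 h1n 0) ^ (M 2 0) = 1
      rw [M.symmetric 2 0, h13, F0, F2]
      refine swap_pow (σ0_sq hn2 h1n) (σ2_sq) ?_
      rw [pow_mul, rel02 hn2 h1n, one_pow]
    · show (F hn2 h1n 2 * F hn2 h1n 1) ^ (M 2 1) = 1
      rw [M.symmetric 2 1, h23, F1, F2]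
      refine swap_pow (σ1_sq hn2 h1n) (σ2_sq) ?_
      rw [pow_mul, rel12 hn2 h1n, one_pow]
    · show (F hn2 h1n 2 * F hn2 h1n 2) ^ (M 2 2) = 1
      rw [M.diagonal, pow_one, F2, σ2_sq]
  obtain ⟨φ, hφ⟩ : ∃ φ : W →* Equiv.Perm (Pt n),
      ∀ i, φ (cs.simple i) = F (n := n) hn2 h1n i :=
    ⟨cs.lift ⟨F hn2 h1n, hlift⟩, fun i => cs.lift_apply_simple hlift i⟩
  have hφ0 : φ (cs.simple 0) = σ0 hn2 h1n := (hφ 0).trans (F0 hn2 h1n)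
  have hφ1 : φ (cs.simple 1) = σ1 hn2 h1n := (hφ 1).trans (F1 hn2 h1n)
  have hφ2 : φ (cs.simple 2) = σ2 := (hφ 2).trans (F2 hn2 h1n)
  have hWrap : wrd cs n = 1 := by
    rw [show n = 2 * (3 * k₁₂) from by omega, wrd_even, ← h12, cs.simple_mul_simple_pow]
  set p0 : Pt n := Sum.inl (0 : ZMod n) with hp0
  set T : Set W := {t | cs.IsReflection t ∧ φ t p0 = p0} with hT
  set H := Subgroup.closure T with hH
  have hL : ∀ p : Pt n, φ ((Uw cs p)⁻¹) p0 = p :=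
    Lfull cs hn2 h1n φ hφ0 hφ1 hφ2
  have hL2 : ∀ p : Pt n, φ (Uw cs p) p = p0 := by
    intro p
    have h1 := congrArg (φ (Uw cs p)) (hL p)
    rw [← Equiv.Perm.mul_apply, ← map_mul, mul_inv_cancel, map_one, Equiv.Perm.one_apply]
      at h1
    exact h1.symm
  have Hfix : ∀ w ∈ H, φ w p0 = p0 := by
    intro w hw
    refine Subgroup.closure_induction (fun x hx => hx.2) ?_ ?_ ?_ hw
    · simp
    · intro x y _ _ ihx ihy
      rw [map_mul, Equiv.Perm.mul_apply, ihy, ihx]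
    · intro x _ ih
      rw [map_inv]
      conv_lhs => rw [← ih]
      rw [Equiv.Perm.inv_def, Equiv.symm_apply_apply]
  have cover : ∀ v : W, ∃ (p : Pt n) (h : W), h ∈ H ∧ v = h * Uw cs p := by
    intro v
    obtain ⟨l, rfl⟩ := cs.wordProd_surjective v
    induction l using List.reverseRecOn with
    | nil =>
      refine ⟨p0, 1, one_mem _, ?_⟩
      rw [cs.wordProd_nil, one_mul]
      show (1 : W) = wrd cs (0 : ZMod n).val
      rw [ZMod.val_zero]
      rfl
    | append_singleton l i ih =>
      obtain ⟨p, h, hHh, hv⟩ := ih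
      rw [cs.wordProd_append, cs.wordProd_singleton, hv]
      rcases step cs hn2 h1n hWrap p i with ⟨q, hq⟩ | hfix
      · exact ⟨q, h, hHh, by rw [mul_assoc, hq]⟩
      · refine ⟨p, h * (Uw cs p * cs.simple i * (Uw cs p)⁻¹),
          mul_mem hHh (Subgroup.subset_closure ?_), by group⟩
        constructor
        · exact ⟨Uw cs p, i, rfl⟩
        · rw [map_mul, map_mul, Equiv.Perm.mul_apply, Equiv.Perm.mul_apply, hL p,
            hφ i, hfix, hL2 p]
  let ψ : Pt n → W ⧸ H := fun p => ((Uw cs p)⁻¹ : W)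
  have hsurj : Function.Surjective ψ := by
    intro x
    obtain ⟨v, rfl⟩ := QuotientGroup.mk_surjective x
    obtain ⟨p, h, hHh, hv⟩ := cover v⁻¹
    refine ⟨p, ?_⟩
    show QuotientGroup.mk ((Uw cs p)⁻¹) = QuotientGroup.mk v
    rw [QuotientGroup.eq]
    have hv2 : v = (Uw cs p)⁻¹ * h⁻¹ := by
      rw [← mul_inv_rev, ← hv, inv_inv]
    rw [inv_inv, hv2, ← mul_assoc, mul_inv_cancel, one_mul]
    exact inv_mem hHh
  have hinj : Function.Injective ψ := by
    intro p q hpq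
    have h1 : (Uw cs p)⁻¹⁻¹ * (Uw cs q)⁻¹ ∈ H := (QuotientGroup.eq).mp hpq
    rw [inv_inv] at h1
    have h2 := Hfix _ h1
    rw [map_mul, Equiv.Perm.mul_apply, hL q] at h2
    exact ((φ (Uw cs p)).injective (h2.trans (hL2 p).symm)).symm
  have hcard : Nat.card (Pt n) = 18 * k₁₂ := by
    show Nat.card (ZMod n ⊕ (ZMod n ⊕ ZMod n)) = 18 * k₁₂
    rw [Nat.card_sum, Nat.card_sum, Nat.card_zmod]
    omega
  have hindex : H.index = 18 * k₁₂ := by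
    rw [Subgroup.index_eq_card, ← Nat.card_eq_of_bijective ψ ⟨hinj, hsurj⟩, hcard]
  refine ⟨T, fun t ht => ht.1, hindex, ?_⟩
  intro htop
  have hone : (⊤ : Subgroup W).index = 18 * k₁₂ := by
    rw [← htop]
    exact hindex
  rw [Subgroup.index_top] at hone
  omega
end

section
/- Let (W,S) be a Coxeter system and let s_i, s_j, s_k be three distinct generators in S such that the orders m_{ij}, m_{ik}, m_{kj} of the products s_is_j, s_is_k, s_ks_j are each odd or infinite. Then s_i and s_j s_k s_j generate an infinite dihedral group; equivalently, the element s_i · (s_j s_k s_j) has infinite order in W. -/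
open Real Finsupp

noncomputable section TitsAux

variable {B : Type*} (M : CoxeterMatrix B)

def kk (a b : B) : ℝ := if M a b = 0 then -1 else -Real.cos (π / (M a b))

lemma kk_symm (a b : B) : kk M a b = kk M b a := by
  unfold kk; rw [M.symmetric a b]

lemma kk_self (a : B) : kk M a a = 1 := by
  simp [kk, M.diagonal a]

lemma neg_one_le_kk (a b : B) : -1 ≤ kk M a b := by
  unfold kk
  split
  · exact le_refl _
  · have := Real.cos_le_one (π / (M a b)); linarith

lemma kk_le_neg_half {a b : B} (hab : a ≠ b) (h : M a b = 0 ∨ Odd (M a b)) :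
    kk M a b ≤ -(1/2) := by
  unfold kk
  rcases h with h | h
  · rw [if_pos h]; norm_num
  · have h1 : M a b ≠ 1 := M.off_diagonal a b hab
    have h3 : 3 ≤ M a b := by rcases h with ⟨t, ht⟩; omega
    have hne : M a b ≠ 0 := by omega
    rw [if_neg hne]
    have hm3 : (3:ℝ) ≤ (M a b : ℝ) := by exact_mod_cast h3
    have hcos : Real.cos (π/3) ≤ Real.cos (π / (M a b)) := by
      apply Real.cos_le_cos_of_nonneg_of_le_pi
      · positivity
      · linarith [Real.pi_pos]
      · apply div_le_div_of_nonneg_left Real.pi_pos.le (by norm_num) hm3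
    rw [Real.cos_pi_div_three] at hcos
    linarith

lemma kk_sq_lt_one {a b : B} (h2 : 2 ≤ M a b) : (kk M a b)^2 < 1 := by
  unfold kk
  have hne : M a b ≠ 0 := by omega
  rw [if_neg hne]
  have hm : (2:ℝ) ≤ (M a b : ℝ) := by exact_mod_cast h2
  have h0 : 0 < π / (M a b) := by positivity
  have hle : π / (M a b) ≤ π / 2 :=
    div_le_div_of_nonneg_left Real.pi_pos.le (by norm_num) hm
  have hc1 : Real.cos (π / (M a b)) < 1 := by
    have := Real.cos_lt_cos_of_nonneg_of_le_pi (x := 0) (y := π / (M a b))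
      le_rfl (by linarith [Real.pi_pos]) h0
    rwa [Real.cos_zero] at this
  have hc0 : 0 ≤ Real.cos (π / (M a b)) := by
    apply Real.cos_nonneg_of_mem_Icc
    constructor <;> [linarith [Real.pi_pos]; linarith]
  nlinarith

def fB (a : B) : (B →₀ ℝ) →ₗ[ℝ] ℝ :=
  Finsupp.linearCombination ℝ (fun b => kk M a b)

lemma fB_single (a b : B) (x : ℝ) : fB M a (Finsupp.single b x) = x * kk M a b := by
  simp [fB, Finsupp.linearCombination_single, smul_eq_mul]

def sigma (a : B) : Module.End ℝ (B →₀ ℝ) :=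
  LinearMap.id - (2:ℝ) • ((Finsupp.lsingle a).comp (fB M a))

lemma sigma_apply (a : B) (v : B →₀ ℝ) :
    sigma M a v = v - (2 * fB M a v) • Finsupp.single a 1 := by
  simp only [sigma, LinearMap.sub_apply, LinearMap.id_apply, LinearMap.smul_apply,
    LinearMap.comp_apply, Finsupp.lsingle_apply]
  congr 1
  rw [Finsupp.smul_single, Finsupp.smul_single, smul_eq_mul, smul_eq_mul, mul_one]

lemma sigma_sigma (a : B) (v : B →₀ ℝ) : sigma M a (sigma M a v) = v := by
  rw [sigma_apply, sigma_apply]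
  simp only [map_sub, map_smul, fB_single, kk_self, smul_eq_mul, mul_one]
  module


lemma iter2 {V : Type*} [AddCommGroup V] [Module ℝ V] (E : Module.End ℝ V) (u w : V)
    (A : Matrix (Fin 2) (Fin 2) ℝ)
    (h : ∀ x y : ℝ, E (x • u + y • w) =
      (A 0 0 * x + A 0 1 * y) • u + (A 1 0 * x + A 1 1 * y) • w) :
    ∀ (n : ℕ) (x y : ℝ), (E^n) (x • u + y • w) =
      ((A^n) 0 0 * x + (A^n) 0 1 * y) • u + ((A^n) 1 0 * x + (A^n) 1 1 * y) • w := by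
  intro n
  induction n with
  | zero => intro x y; simp [Matrix.one_apply]
  | succ n ih =>
    intro x y
    rw [pow_succ, Module.End.mul_apply, h x y, ih, pow_succ]
    simp only [Matrix.mul_apply, Fin.sum_univ_two]
    module

lemma step2 (a b : B) (x y : ℝ) :
    (sigma M a) ((sigma M b) (x • Finsupp.single a 1 + y • Finsupp.single b 1)) =
    ((4*(kk M a b)^2-1) * x + (2*kk M a b) * y) • Finsupp.single a (1:ℝ)
      + ((-(2*kk M a b)) * x + (-1) * y) • Finsupp.single b (1:ℝ) := by
  rw [sigma_apply, sigma_apply]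
  simp only [map_add, map_sub, map_smul, fB_single, kk_self, smul_eq_mul, one_mul, mul_one]
  rw [kk_symm M b a]
  module


lemma A2_pow (m : ℕ) (hm : 2 ≤ m) :
    (!![4*(-Real.cos (π/m))^2-1, 2*(-Real.cos (π/m));
       -(2*(-Real.cos (π/m))), -1] : Matrix (Fin 2) (Fin 2) ℝ)^m = 1 := by
  set c : ℝ := -Real.cos (π/m) with hc
  set A : Matrix (Fin 2) (Fin 2) ℝ := !![4*c^2-1, 2*c; -(2*c), -1] with hA
  have hmR : (0:ℝ) < (m:ℝ) := by
    have : (0:ℕ) < m := by omega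
    exact_mod_cast this
  set φ : ℝ := 2 * (π/m) with hφ
  have hA2 : A * A = (2 * Real.cos φ) • A - 1 := by
    have hcos2 : Real.cos φ = 2 * (Real.cos (π/m))^2 - 1 := Real.cos_two_mul _
    ext r s
    fin_cases r <;> fin_cases s <;>
      · simp [hA, Matrix.mul_apply, Fin.sum_univ_two, Matrix.one_apply, hcos2, hc]
        ring
  rcases eq_or_lt_of_le hm with hm2 | hm3
  · -- m = 2
    have hc0 : c = 0 := by
      rw [hc, ← hm2]
      norm_num [Real.cos_pi_div_two]
    rw [← hm2, pow_two]
    ext r s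
    fin_cases r <;> fin_cases s <;>
      simp [hA, hc0, Matrix.mul_apply, Fin.sum_univ_two, Matrix.one_apply]
  · -- m ≥ 3
    have hm3' : (3:ℝ) ≤ (m:ℝ) := by exact_mod_cast hm3
    have hφpos : 0 < φ := by rw [hφ]; positivity
    have hφlt : φ < π := by
      rw [hφ]
      have h1 : π / m ≤ π / 3 :=
        div_le_div_of_nonneg_left Real.pi_pos.le (by norm_num) hm3'
      nlinarith [Real.pi_pos]
    have hs : 0 < Real.sin φ := Real.sin_pos_of_pos_of_lt_pi hφpos hφlt
    have key : ∀ n : ℕ, A^(n+1) =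
        (Real.sin ((n+1)*φ)/Real.sin φ) • A + (-(Real.sin (n*φ)/Real.sin φ)) • 1 := by
      intro n
      induction n with
      | zero => simp [div_self (ne_of_gt hs)]
      | succ n ih =>
        rw [pow_succ, ih]
        have hsin : Real.sin (((n:ℝ)+1+1)*φ)
            = 2 * Real.cos φ * Real.sin (((n:ℝ)+1)*φ) - Real.sin ((n:ℝ)*φ) := by
          have e1 : ((n:ℝ)+1+1)*φ = ((n:ℝ)+1)*φ + φ := by ring
          have e2 : (n:ℝ)*φ = ((n:ℝ)+1)*φ - φ := by ring
          rw [e1, e2, Real.sin_add, Real.sin_sub]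
          ring
        rw [add_mul, smul_mul_assoc, smul_mul_assoc, one_mul, hA2]
        push_cast
        rw [hsin]
        ext r s
        fin_cases r <;> fin_cases s <;>
          · simp [Matrix.add_apply, Matrix.smul_apply, Matrix.sub_apply, Matrix.one_apply,
              Matrix.mul_apply, Fin.sum_univ_two, smul_eq_mul, hA]
            field_simp
            ring
    have hm1 : m = (m - 1) + 1 := by omega
    rw [hm1, key (m-1)]
    have hcast : ((m-1:ℕ):ℝ) = (m:ℝ) - 1 := by
      have h1 : (1:ℕ) ≤ m := by omega
      push_cast [h1]
      ring
    have hmφ : (((m-1:ℕ):ℝ)+1) * φ = 2 * π := by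
      rw [hcast, hφ]
      field_simp
      try ring
    have hm1φ : ((m-1:ℕ):ℝ) * φ = 2*π - φ := by
      rw [hcast, hφ]
      field_simp
      try ring
    rw [hmφ, hm1φ, Real.sin_two_pi, Real.sin_two_pi_sub]
    rw [zero_div, neg_div, neg_neg, div_self (ne_of_gt hs)]
    simp


lemma kk_eq_neg_cos {a b : B} (h2 : 2 ≤ M a b) :
    kk M a b = -Real.cos (π / (M a b)) := by
  unfold kk
  rw [if_neg (by omega)]

lemma sigma_liftable : CoxeterMatrix.IsLiftable M (fun a => sigma M a) := by
  intro a b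
  rcases eq_or_ne a b with rfl | hab
  · rw [M.diagonal, pow_one]
    refine LinearMap.ext fun v => ?_
    simpa only [Module.End.mul_apply, Module.End.one_apply] using sigma_sigma M a v
  rcases Nat.eq_zero_or_pos (M a b) with h0 | hpos
  · rw [h0, pow_zero]
  have h2 : 2 ≤ M a b := by
    have := M.off_diagonal a b hab
    omega
  have hc2 : (kk M a b)^2 < 1 := kk_sq_lt_one M h2
  have hAm : (!![4*(kk M a b)^2-1, 2*(kk M a b); -(2*(kk M a b)), -1]
      : Matrix (Fin 2) (Fin 2) ℝ)^(M a b) = 1 := by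
    rw [kk_eq_neg_cos M h2]
    exact A2_pow (M a b) h2
  refine LinearMap.ext fun v => ?_
  have hstep : ∀ x y : ℝ,
      (sigma M a * sigma M b) (x • Finsupp.single a (1:ℝ) + y • Finsupp.single b (1:ℝ)) =
      ((!![4*(kk M a b)^2-1, 2*(kk M a b); -(2*(kk M a b)), -1] : Matrix (Fin 2) (Fin 2) ℝ) 0 0 * x
        + (!![4*(kk M a b)^2-1, 2*(kk M a b); -(2*(kk M a b)), -1] : Matrix (Fin 2) (Fin 2) ℝ) 0 1 * y)
          • Finsupp.single a (1:ℝ)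
      + ((!![4*(kk M a b)^2-1, 2*(kk M a b); -(2*(kk M a b)), -1] : Matrix (Fin 2) (Fin 2) ℝ) 1 0 * x
        + (!![4*(kk M a b)^2-1, 2*(kk M a b); -(2*(kk M a b)), -1] : Matrix (Fin 2) (Fin 2) ℝ) 1 1 * y)
          • Finsupp.single b (1:ℝ) := by
    intro x y
    rw [Module.End.mul_apply, step2]
    simp [Matrix.cons_val_zero, Matrix.cons_val_one, Matrix.head_cons]
  have hiter := iter2 _ _ _ _ hstep (M a b)
  rw [hAm] at hiter
  set c : ℝ := kk M a b with hc
  set x : ℝ := (fB M a v - c * fB M b v)/(1-c^2) with hx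
  set y : ℝ := (fB M b v - c * fB M a v)/(1-c^2) with hy
  set z : (B →₀ ℝ) := v - x • Finsupp.single a 1 - y • Finsupp.single b 1 with hz
  have hden : (1:ℝ) - c^2 ≠ 0 := by nlinarith
  have hfaz : fB M a z = 0 := by
    rw [hz]
    simp only [map_sub, map_smul, fB_single, kk_self, smul_eq_mul, one_mul, mul_one]
    rw [hx, hy]
    field_simp
    ring
  have hfbz : fB M b z = 0 := by
    rw [hz]
    simp only [map_sub, map_smul, fB_single, kk_self, smul_eq_mul, one_mul, mul_one]
    rw [hx, hy, kk_symm M b a, ← hc]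
    field_simp
    ring
  have hσbz : sigma M b z = z := by
    rw [sigma_apply, hfbz, mul_zero, zero_smul, sub_zero]
  have hσaz : sigma M a z = z := by
    rw [sigma_apply, hfaz, mul_zero, zero_smul, sub_zero]
  have hEz : ∀ n : ℕ, ((sigma M a * sigma M b)^n) z = z := by
    intro n
    induction n with
    | zero => simp
    | succ n ih =>
      rw [pow_succ', Module.End.mul_apply, ih, Module.End.mul_apply, hσbz, hσaz]
  have hv : v = (x • Finsupp.single a 1 + y • Finsupp.single b 1) + z := by
    rw [hz]; abel
  show ((sigma M a * sigma M b)^(M a b)) v = LinearMap.id (R := ℝ) v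
  calc ((sigma M a * sigma M b)^(M a b)) v
      = ((sigma M a * sigma M b)^(M a b)) (x • Finsupp.single a 1 + y • Finsupp.single b 1)
        + ((sigma M a * sigma M b)^(M a b)) z := by
        rw [← map_add, ← hv]
    _ = v := by
        rw [hEz, hiter x y]
        simp only [Matrix.one_apply_eq, Matrix.one_apply_ne (by decide : (0:Fin 2) ≠ 1),
          Matrix.one_apply_ne (by decide : (1:Fin 2) ≠ 0), one_mul, zero_mul, add_zero, zero_add]
        rw [hv]
    _ = LinearMap.id (R := ℝ) v := rfl


lemma step3 (i j k : B) (x y : ℝ) :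
    (sigma M i) ((sigma M j) ((sigma M k) ((sigma M j)
      (x • Finsupp.single i (1:ℝ)
        + y • (Finsupp.single k (1:ℝ) - (2*kk M j k) • Finsupp.single j (1:ℝ)))))) =
    ((4*(kk M i k - 2*kk M i j*kk M j k)^2 - 1) * x
        + (2*(kk M i k - 2*kk M i j*kk M j k)) * y) • Finsupp.single i (1:ℝ)
      + ((-(2*(kk M i k - 2*kk M i j*kk M j k))) * x + (-1) * y)
        • (Finsupp.single k (1:ℝ) - (2*kk M j k) • Finsupp.single j (1:ℝ)) := by
  simp only [sigma_apply, map_add, map_sub, map_smul, fB_single, kk_self, smul_eq_mul,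
    mul_one, one_mul]
  rw [kk_symm M j i, kk_symm M k i, kk_symm M k j]
  module

end TitsAux

section Growth

lemma entries_grow (c : ℝ) (hc : c ≤ -1) (n : ℕ) :
    3 ≤ ((!![4*c^2-1, 2*c; -(2*c), -1] : Matrix (Fin 2) (Fin 2) ℝ)^(n+1)) 0 0 ∧
    1 ≤ ((!![4*c^2-1, 2*c; -(2*c), -1] : Matrix (Fin 2) (Fin 2) ℝ)^(n+1)) 0 0
        + c * ((!![4*c^2-1, 2*c; -(2*c), -1] : Matrix (Fin 2) (Fin 2) ℝ)^(n+1)) 1 0 := by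
  have hc2 : 1 ≤ c^2 := by nlinarith
  induction n with
  | zero =>
    rw [pow_one]
    constructor
    · simp
      nlinarith
    · simp
      nlinarith
  | succ n ih =>
    obtain ⟨h1, h2⟩ := ih
    have hrec : (!![4*c^2-1, 2*c; -(2*c), -1] : Matrix (Fin 2) (Fin 2) ℝ)^(n+1+1)
        = !![4*c^2-1, 2*c; -(2*c), -1] * (!![4*c^2-1, 2*c; -(2*c), -1])^(n+1) := by
      rw [← pow_succ']
    set X := (!![4*c^2-1, 2*c; -(2*c), -1] : Matrix (Fin 2) (Fin 2) ℝ)^(n+1) with hX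
    have e00 : ((!![4*c^2-1, 2*c; -(2*c), -1] : Matrix (Fin 2) (Fin 2) ℝ)^(n+1+1)) 0 0
        = (4*c^2-1) * X 0 0 + 2*c * X 1 0 := by
      rw [hrec, Matrix.mul_apply, Fin.sum_univ_two]
      simp
    have e10 : ((!![4*c^2-1, 2*c; -(2*c), -1] : Matrix (Fin 2) (Fin 2) ℝ)^(n+1+1)) 1 0
        = -(2*c) * X 0 0 + (-1) * X 1 0 := by
      rw [hrec, Matrix.mul_apply, Fin.sum_univ_two]
      simp
    constructor
    · rw [e00]; nlinarith
    · rw [e00, e10]; nlinarith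

end Growth

/-- Let `(W,S)` be a Coxeter system and `s_i, s_j, s_k` three distinct
generators such that the orders `m i j`, `m i k`, `m k j` are each odd or infinite (`0` encodes
`∞`).  Then `s_i` and `s_j s_k s_j` generate an infinite dihedral group; equivalently, the
element `s_i * (s_j * s_k * s_j)` has infinite order in `W`. -/
theorem statement6 {B : Type*} {M : CoxeterMatrix B} {W : Type*} [Group W]
    (cs : CoxeterSystem M W)
    (i j k : B) (hij : i ≠ j) (hik : i ≠ k) (hjk : j ≠ k)
    (hmij : M i j = 0 ∨ Odd (M i j))
    (hmik : M i k = 0 ∨ Odd (M i k))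
    (hmkj : M k j = 0 ∨ Odd (M k j)) :
    ¬ IsOfFinOrder (cs.simple i * (cs.simple j * cs.simple k * cs.simple j)) := by
  intro hfin
  obtain ⟨n, hn, hpow⟩ := isOfFinOrder_iff_pow_eq_one.mp hfin
  have hsimple : ∀ a : B,
      (CoxeterSystem.lift cs ⟨fun a => sigma M a, sigma_liftable M⟩) (cs.simple a)
        = sigma M a := fun a =>
    CoxeterSystem.lift_apply_simple cs (sigma_liftable M) a
  have hEpow : (sigma M i * (sigma M j * sigma M k * sigma M j))^n = 1 := by
    have h1 : (CoxeterSystem.lift cs ⟨fun a => sigma M a, sigma_liftable M⟩)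
        ((cs.simple i * (cs.simple j * cs.simple k * cs.simple j))^n) = 1 := by
      rw [hpow, map_one]
    simpa only [map_pow, map_mul, hsimple] using h1
  -- bounds on the form
  have hb1 : kk M i j ≤ -(1/2) := kk_le_neg_half M hij hmij
  have hb2 : kk M i k ≤ -(1/2) := kk_le_neg_half M hik hmik
  have hb3 : kk M j k ≤ -(1/2) := by
    rw [kk_symm M j k]
    exact kk_le_neg_half M (Ne.symm hjk) hmkj
  have hg1 : -1 ≤ kk M i j := neg_one_le_kk M i j
  have hg3 : -1 ≤ kk M j k := neg_one_le_kk M j k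
  have hc : kk M i k - 2*kk M i j*kk M j k ≤ -1 := by nlinarith
  -- action on the invariant plane
  have hstep : ∀ x y : ℝ,
      (sigma M i * (sigma M j * sigma M k * sigma M j))
        (x • Finsupp.single i (1:ℝ)
          + y • (Finsupp.single k (1:ℝ) - (2*kk M j k) • Finsupp.single j (1:ℝ))) =
      ((!![4*(kk M i k - 2*kk M i j*kk M j k)^2-1, 2*(kk M i k - 2*kk M i j*kk M j k);
          -(2*(kk M i k - 2*kk M i j*kk M j k)), -1] : Matrix (Fin 2) (Fin 2) ℝ) 0 0 * x
        + (!![4*(kk M i k - 2*kk M i j*kk M j k)^2-1, 2*(kk M i k - 2*kk M i j*kk M j k);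
          -(2*(kk M i k - 2*kk M i j*kk M j k)), -1] : Matrix (Fin 2) (Fin 2) ℝ) 0 1 * y)
          • Finsupp.single i (1:ℝ)
      + ((!![4*(kk M i k - 2*kk M i j*kk M j k)^2-1, 2*(kk M i k - 2*kk M i j*kk M j k);
          -(2*(kk M i k - 2*kk M i j*kk M j k)), -1] : Matrix (Fin 2) (Fin 2) ℝ) 1 0 * x
        + (!![4*(kk M i k - 2*kk M i j*kk M j k)^2-1, 2*(kk M i k - 2*kk M i j*kk M j k);
          -(2*(kk M i k - 2*kk M i j*kk M j k)), -1] : Matrix (Fin 2) (Fin 2) ℝ) 1 1 * y)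
          • (Finsupp.single k (1:ℝ) - (2*kk M j k) • Finsupp.single j (1:ℝ)) := by
    intro x y
    have hcomp : (sigma M i * (sigma M j * sigma M k * sigma M j))
        (x • Finsupp.single i (1:ℝ)
          + y • (Finsupp.single k (1:ℝ) - (2*kk M j k) • Finsupp.single j (1:ℝ))) =
        (sigma M i) ((sigma M j) ((sigma M k) ((sigma M j)
          (x • Finsupp.single i (1:ℝ)
            + y • (Finsupp.single k (1:ℝ) - (2*kk M j k) • Finsupp.single j (1:ℝ)))))) := by
      simp only [Module.End.mul_apply]
    rw [hcomp, step3]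
    simp
    try module
  have hiter := iter2 _ _ _ _ hstep n 1 0
  rw [hEpow] at hiter
  simp only [Module.End.one_apply, mul_one, mul_zero, add_zero, one_smul, zero_smul,
    add_zero] at hiter
  have heval := congrArg (fun f : B →₀ ℝ => f i) hiter
  simp only [Finsupp.add_apply, Finsupp.smul_apply, Finsupp.sub_apply,
    Finsupp.single_eq_same, Finsupp.single_eq_of_ne' (Ne.symm hik),
    Finsupp.single_eq_of_ne' (Ne.symm hij), smul_eq_mul] at heval
  obtain ⟨m, rfl⟩ : ∃ m, n = m + 1 := ⟨n - 1, by omega⟩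
  have hgrow := (entries_grow (kk M i k - 2*kk M i j*kk M j k) hc m).1
  norm_num at heval
  linarith [heval, hgrow]
end
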